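/- Let Δ ⊂ ℝⁿ be a compact convex polytope with nonempty interior, and for each v in an index set V with weights n_v > 0 (only finitely many 'active'), let θ_v : Δ → ℝ be continuous concave with θ_v = 0 for all but finitely many v; set θ = Σ_v n_v θ_v. Suppose x_max ∈ Δ maximizes θ and 0 is a vertex (extreme point) of the sup-differential ∂θ(x_max). Then for every maximizer x of θ, 0 is a vertex of ∂θ(x), and the equation 0 = Σ_v n_v a_v with a_v ∈ ∂θ_v(x) has a unique solution (u_v)_v, with each u_v a vertex of ∂θ_v(x). -/

import Mathlib

open RealInnerProductSpace

/-- The sup-differential of a concave function `g` at `x` relative to `Δ`. -/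
def supDiff {n : ℕ} (Δ : Set (EuclideanSpace ℝ (Fin n)))
    (g : EuclideanSpace ℝ (Fin n) → ℝ) (x : EuclideanSpace ℝ (Fin n)) :
    Set (EuclideanSpace ℝ (Fin n)) :=
  {u | ∀ z ∈ Δ, g z - g x ≤ ⟪u, z - x⟫}

set_option maxHeartbeats 1000000 in
lemma stmt17_split {n : ℕ} {Δ : Set (EuclideanSpace ℝ (Fin n))}
    (hΔconv : Convex ℝ Δ) (hΔint : (interior Δ).Nonempty)
    {f g : EuclideanSpace ℝ (Fin n) → ℝ}
    (hf : ConcaveOn ℝ Δ f) (hg : ConcaveOn ℝ Δ g) (hfc : ContinuousOn f Δ)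
    {x : EuclideanSpace ℝ (Fin n)} (hx : x ∈ Δ)
    {u : EuclideanSpace ℝ (Fin n)} (hu : u ∈ supDiff Δ (fun z => f z + g z) x) :
    ∃ p q, p ∈ supDiff Δ f x ∧ q ∈ supDiff Δ g x ∧ p + q = u := by
  classical
  obtain ⟨x0, hx0⟩ := hΔint
  set F : EuclideanSpace ℝ (Fin n) → ℝ := fun z => f z - f x - ⟪u, z - x⟫ with hF
  clear_value F
  set G : EuclideanSpace ℝ (Fin n) → ℝ := fun z => g z - g x with hG
  clear_value G
  have hFG : ∀ z ∈ Δ, F z ≤ -G z := by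
    intro z hz
    have h := hu z hz
    simp only at h
    simp only [hF, hG]
    linarith
  have hFconc : ∀ z1 ∈ Δ, ∀ z2 ∈ Δ, ∀ a b : ℝ, 0 ≤ a → 0 ≤ b → a + b = 1 →
      a * F z1 + b * F z2 ≤ F (a • z1 + b • z2) := by
    intro z1 hz1 z2 hz2 a b ha hb hab
    have h1 := hf.2 hz1 hz2 ha hb hab
    simp only [smul_eq_mul] at h1
    have h2 : (a • z1 + b • z2) - x = a • (z1 - x) + b • (z2 - x) := by
      conv_lhs => rw [show (x : EuclideanSpace ℝ (Fin n)) = (a + b) • x by rw [hab, one_smul]]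
      module
    have h3 : ⟪u, (a • z1 + b • z2) - x⟫ = a * ⟪u, z1 - x⟫ + b * ⟪u, z2 - x⟫ := by
      rw [h2, inner_add_right, real_inner_smul_right, real_inner_smul_right]
    simp only [hF]
    rw [h3]
    have h4 : a * f x + b * f x = f x := by rw [← add_mul, hab, one_mul]
    have h5 : a * ⟪u, z1 - x⟫ + b * ⟪u, z2 - x⟫ = a * ⟪u, z1 - x⟫ + b * ⟪u, z2 - x⟫ := rfl
    ring_nf
    ring_nf at h1 h4
    linarith
  have hGconc : ∀ z1 ∈ Δ, ∀ z2 ∈ Δ, ∀ a b : ℝ, 0 ≤ a → 0 ≤ b → a + b = 1 →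
      a * G z1 + b * G z2 ≤ G (a • z1 + b • z2) := by
    intro z1 hz1 z2 hz2 a b ha hb hab
    have h1 := hg.2 hz1 hz2 ha hb hab
    simp only [smul_eq_mul] at h1
    simp only [hG]
    have h4 : a * g x + b * g x = g x := by rw [← add_mul, hab, one_mul]
    ring_nf
    ring_nf at h1 h4
    linarith
  -- the two convex sets
  set A : Set (EuclideanSpace ℝ (Fin n) × ℝ) := {p | p.1 ∈ interior Δ ∧ p.2 < F p.1} with hA
  set B : Set (EuclideanSpace ℝ (Fin n) × ℝ) := {p | p.1 ∈ Δ ∧ -G p.1 ≤ p.2} with hB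
  have hAconv : Convex ℝ A := by
    rintro ⟨z1, t1⟩ ⟨hz1, ht1⟩ ⟨z2, t2⟩ ⟨hz2, ht2⟩ a b ha hb hab
    constructor
    · exact hΔconv.interior hz1 hz2 ha hb hab
    · show a * t1 + b * t2 < F (a • z1 + b • z2)
      have := hFconc z1 (interior_subset hz1) z2 (interior_subset hz2) a b ha hb hab
      rcases eq_or_lt_of_le ha with rfl | ha'
      · simp only [zero_add] at hab; subst hab
        simp only [zero_mul, zero_add, one_mul] at this ⊢
        nlinarith
      · rcases eq_or_lt_of_le hb with rfl | hb'
        · simp only [add_zero] at hab; subst hab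
          nlinarith
        · nlinarith
  have hBconv : Convex ℝ B := by
    rintro ⟨z1, t1⟩ ⟨hz1, ht1⟩ ⟨z2, t2⟩ ⟨hz2, ht2⟩ a b ha hb hab
    refine ⟨hΔconv hz1 hz2 ha hb hab, ?_⟩
    show -G (a • z1 + b • z2) ≤ a * t1 + b * t2
    have := hGconc z1 hz1 z2 hz2 a b ha hb hab
    nlinarith [mul_le_mul_of_nonneg_left ht1 ha, mul_le_mul_of_nonneg_left ht2 hb]
  have hAopen : IsOpen A := by
    rw [isOpen_iff_mem_nhds]
    rintro ⟨z, t⟩ ⟨hz, ht⟩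
    simp only at hz ht
    have hFc : ContinuousAt F z := by
      rw [hF]
      have hΔnhds : Δ ∈ nhds z := mem_nhds_iff.2 ⟨interior Δ, interior_subset, isOpen_interior, hz⟩
      have h1 : ContinuousAt f z := (hfc z (interior_subset hz)).continuousAt hΔnhds
      have h2 : ContinuousAt (fun w : EuclideanSpace ℝ (Fin n) => ⟪u, w - x⟫) z :=
        (continuous_const.inner (continuous_id.sub continuous_const)).continuousAt
      exact (h1.sub continuousAt_const).sub h2
    set m := (t + F z) / 2 with hm
    clear_value m
    have htm : t < m := by simp only [hm]; linarith
    have hmF : m < F z := by simp only [hm]; linarith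
    have hU : (interior Δ ∩ F ⁻¹' Set.Ioi m) ∈ nhds z :=
      Filter.inter_mem (isOpen_interior.mem_nhds hz) (hFc.preimage_mem_nhds (Ioi_mem_nhds hmF))
    have : (interior Δ ∩ F ⁻¹' Set.Ioi m) ×ˢ Set.Iio m ∈ nhds ((z, t) : EuclideanSpace ℝ (Fin n) × ℝ) :=
      prod_mem_nhds hU (Iio_mem_nhds htm)
    refine Filter.mem_of_superset this ?_
    rintro ⟨z', t'⟩ ⟨⟨hz', hFz'⟩, ht'⟩
    exact ⟨hz', lt_trans ht' hFz'⟩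
  have hdisj : Disjoint A B := by
    rw [Set.disjoint_left]
    rintro ⟨z, t⟩ ⟨hz, ht⟩ ⟨hz', ht'⟩
    have := hFG z hz'
    simp only at ht ht'
    linarith
  obtain ⟨φ, s, hφA, hφB⟩ := geometric_hahn_banach_open hAconv hAopen hBconv hdisj
  set ψ : EuclideanSpace ℝ (Fin n) → ℝ := fun z => φ (z, 0) with hψ
  set c : ℝ := φ (0, 1) with hc
  have hφeq : ∀ (z : EuclideanSpace ℝ (Fin n)) (t : ℝ), φ (z, t) = ψ z + t * c := by
    intro z t
    have : ((z, t) : EuclideanSpace ℝ (Fin n) × ℝ) = (z, 0) + t • ((0 : EuclideanSpace ℝ (Fin n)), (1 : ℝ)) := by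
      simp [Prod.ext_iff]
    rw [this, map_add, map_smul, smul_eq_mul, hψ, hc]
  have hψlin : ∀ (a b : ℝ) (z1 z2 : EuclideanSpace ℝ (Fin n)), ψ (a • z1 + b • z2) = a * ψ z1 + b * ψ z2 := by
    intro a b z1 z2
    have : ((a • z1 + b • z2, (0:ℝ)) : EuclideanSpace ℝ (Fin n) × ℝ) = a • (z1, (0:ℝ)) + b • (z2, (0:ℝ)) := by
      simp [Prod.ext_iff]
    simp only [hψ]
    rw [this, map_add, map_smul, map_smul, smul_eq_mul, smul_eq_mul]
  have hGx : G x = 0 := by simp [hG]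
  have hFx : F x = 0 := by simp [hF]
  -- c > 0
  have hBmem : ∀ z ∈ Δ, ∀ t : ℝ, -G z ≤ t → s ≤ ψ z + t * c := by
    intro z hz t htt
    have := hφB (z, t) ⟨hz, htt⟩
    rwa [hφeq] at this
  have hcpos : 0 < c := by
    have hx0A : ((x0, F x0 - 1) : EuclideanSpace ℝ (Fin n) × ℝ) ∈ A := ⟨hx0, by simp⟩
    have h1 : ψ x0 + (F x0 - 1) * c < s := by
      have := hφA _ hx0A
      rwa [hφeq] at this
    rcases lt_trichotomy c 0 with hneg | hzero | hpos
    · exfalso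
      set t0 : ℝ := max (-G x0) ((s - 1 - ψ x0) / c) with ht0
      have h2 := hBmem x0 (interior_subset hx0) t0 (le_max_left _ _)
      have h3 : t0 * c ≤ s - 1 - ψ x0 := by
        have := le_max_right (-G x0) ((s - 1 - ψ x0) / c)
        calc t0 * c ≤ ((s - 1 - ψ x0) / c) * c := by
              apply mul_le_mul_of_nonpos_right this hneg.le
          _ = s - 1 - ψ x0 := div_mul_cancel₀ _ hneg.ne
      linarith
    · exfalso
      have h2 := hBmem x0 (interior_subset hx0) (-G x0) le_rfl
      rw [hzero] at h1 h2
      simp at h1 h2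
      linarith
    · exact hpos
  -- the two key bounds
  have hGbound : ∀ z ∈ Δ, G z ≤ (ψ z - s) / c := by
    intro z hz
    have := hBmem z hz (-G z) le_rfl
    rw [le_div_iff₀ hcpos]
    nlinarith
  have hFboundInt : ∀ z ∈ interior Δ, F z ≤ (s - ψ z) / c := by
    intro z hz
    by_contra hcon
    push_neg at hcon
    have hmem : ((z, (s - ψ z) / c) : EuclideanSpace ℝ (Fin n) × ℝ) ∈ A := ⟨hz, hcon⟩
    have := hφA _ hmem
    rw [hφeq] at this
    rw [div_mul_cancel₀ _ hcpos.ne'] at this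
    linarith
  have hψsub : ∀ z1 z2 : EuclideanSpace ℝ (Fin n), ψ (z1 - z2) = ψ z1 - ψ z2 := by
    intro z1 z2
    have : ((z1 - z2, (0:ℝ)) : EuclideanSpace ℝ (Fin n) × ℝ) = (z1, (0:ℝ)) - (z2, (0:ℝ)) := by
      simp [Prod.ext_iff]
    simp only [hψ]
    rw [this, map_sub]
  have hFbound : ∀ z ∈ Δ, F z ≤ (s - ψ z) / c := by
    intro z hz
    by_contra hcon
    push_neg at hcon
    set d : ℝ := F z - (s - ψ z) / c with hd
    have hdpos : 0 < d := by simp only [hd]; linarith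
    set C : ℝ := (s - ψ x0) / c - F x0 with hCdef
    have hdc : d * c = F z * c - (s - ψ z) := by
      simp only [hd]
      field_simp
      try ring
    have hCc : C * c = (s - ψ x0) - F x0 * c := by
      simp only [hCdef]
      field_simp
      try ring
    have hkey : ∀ t : ℝ, 0 < t → t < 1 → t * d ≤ (1 - t) * C := by
      intro t ht0 ht1
      have hzt : (1 - t) • x0 + t • z ∈ interior Δ :=
        hΔconv.combo_interior_self_mem_interior hx0 hz (by linarith) ht0.le (by ring)
      have h1 := hFboundInt _ hzt
      have h2 := hFconc x0 (interior_subset hx0) z hz (1 - t) t (by linarith) ht0.le (by ring)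
      have h3 : ψ ((1 - t) • x0 + t • z) = (1 - t) * ψ x0 + t * ψ z := hψlin _ _ _ _
      rw [h3] at h1
      have h4 : (1 - t) * F x0 + t * F z ≤ (s - ((1 - t) * ψ x0 + t * ψ z)) / c := le_trans h2 h1
      rw [le_div_iff₀ hcpos] at h4
      have h5 : (t * d) * c ≤ ((1 - t) * C) * c := by
        rw [mul_assoc, mul_assoc, hdc, hCc]
        nlinarith [h4]
      exact le_of_mul_le_mul_right h5 hcpos
    have habs : (0:ℝ) ≤ |C| := abs_nonneg C
    have hCle : C ≤ |C| := le_abs_self C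
    have hden : (0:ℝ) < 2 * (|C| + 1) := by linarith
    set r : ℝ := d / (2 * (|C| + 1)) with hr
    have hrpos : 0 < r := div_pos hdpos hden
    have hrd : r * (2 * (|C| + 1)) = d := by
      simp only [hr]; field_simp
    set t : ℝ := max (1/2) (1 - r) with htdef
    have ht0 : (0:ℝ) < t := lt_of_lt_of_le (by norm_num) (le_max_left _ _)
    have ht1 : t < 1 := max_lt (by norm_num) (by linarith)
    have hth : (1:ℝ)/2 ≤ t := le_max_left _ _
    have h1t : 1 - t ≤ r := by
      have := le_max_right (1/2 : ℝ) (1 - r)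
      simp only [htdef]
      linarith [this]
    have hnn : (0:ℝ) ≤ 1 - t := by linarith
    have hk := hkey t ht0 ht1
    nlinarith [mul_le_mul_of_nonneg_left hCle hnn, mul_le_mul_of_nonneg_right h1t habs,
      mul_le_mul_of_nonneg_right hth hdpos.le]
  have hψx : ψ x = s := by
    have h1 := hGbound x hx
    have h2 := hFbound x hx
    rw [hGx] at h1
    rw [hFx] at h2
    have h3 : 0 ≤ ψ x - s := by
      rw [le_div_iff₀ hcpos] at h1; linarith
    have h4 : 0 ≤ s - ψ x := by
      rw [le_div_iff₀ hcpos] at h2; linarith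
    linarith
  set ω : EuclideanSpace ℝ (Fin n) :=
    (InnerProductSpace.toDual ℝ (EuclideanSpace ℝ (Fin n))).symm
      (φ.comp (ContinuousLinearMap.inl ℝ (EuclideanSpace ℝ (Fin n)) ℝ)) with hω
  have hωinner : ∀ z : EuclideanSpace ℝ (Fin n), ⟪ω, z⟫ = ψ z := by
    intro z
    rw [hω, InnerProductSpace.toDual_symm_apply]
    rfl
  set w : EuclideanSpace ℝ (Fin n) := -(c⁻¹ • ω) with hw
  have hwinner : ∀ z : EuclideanSpace ℝ (Fin n), ⟪w, z - x⟫ = -((ψ z - ψ x) / c) := by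
    intro z
    rw [hw, inner_neg_left, real_inner_smul_left, hωinner, hψsub]
    field_simp
  refine ⟨u + w, -w, ?_, ?_, by abel⟩
  · intro z hz
    have h1 := hFbound z hz
    have h2 : ⟪u + w, z - x⟫ = ⟪u, z - x⟫ + ⟪w, z - x⟫ := inner_add_left _ _ _
    rw [h2, hwinner z]
    have h3 : F z = f z - f x - ⟪u, z - x⟫ := by rw [hF]
    rw [hψx] at *
    have h4 : (s - ψ z) / c = -((ψ z - s) / c) := by ring
    rw [h4] at h1
    simp only [hF] at h1
    linarith
  · intro z hz
    have h1 := hGbound z hz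
    rw [inner_neg_left, hwinner z, hψx]
    simp only [hG] at h1
    linarith

lemma stmt17_concave_sum {n : ℕ} {Δ : Set (EuclideanSpace ℝ (Fin n))} (hΔconv : Convex ℝ Δ)
    {ι : Type*} (s : Finset ι) (f : ι → EuclideanSpace ℝ (Fin n) → ℝ)
    (h : ∀ v ∈ s, ConcaveOn ℝ Δ (f v)) :
    ConcaveOn ℝ Δ (fun z => ∑ v ∈ s, f v z) := by
  classical
  induction s using Finset.cons_induction with
  | empty => simpa using concaveOn_const (0:ℝ) hΔconv
  | cons a s ha ih =>
    simp only [Finset.sum_cons]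
    exact (h a (Finset.mem_cons_self a s)).add (ih fun v hv => h v (Finset.mem_cons_of_mem hv))

lemma stmt17_sum_split {n : ℕ} {Δ : Set (EuclideanSpace ℝ (Fin n))}
    (hΔconv : Convex ℝ Δ) (hΔint : (interior Δ).Nonempty)
    {ι : Type*} {x : EuclideanSpace ℝ (Fin n)} (hx : x ∈ Δ)
    (s : Finset ι) (hs : s.Nonempty) (f : ι → EuclideanSpace ℝ (Fin n) → ℝ)
    (hconc : ∀ v, ConcaveOn ℝ Δ (f v)) (hcont : ∀ v, ContinuousOn (f v) Δ) :
    ∀ u ∈ supDiff Δ (fun z => ∑ v ∈ s, f v z) x,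
    ∃ b : ι → EuclideanSpace ℝ (Fin n), (∀ v ∈ s, b v ∈ supDiff Δ (f v) x) ∧
      (∀ v ∉ s, b v = 0) ∧ ∑ v ∈ s, b v = u := by
  classical
  induction hs using Finset.Nonempty.cons_induction with
  | singleton a =>
    intro u hu
    refine ⟨fun v => if v = a then u else 0, ?_, ?_, ?_⟩
    · intro v hv
      simp only [Finset.mem_singleton] at hv
      subst hv
      simp only [if_pos rfl]
      intro z hz
      have := hu z hz
      simpa using this
    · intro v hv
      simp only [Finset.mem_singleton] at hv
      simp [if_neg hv]
    · simp
  | cons a s ha hs ih =>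
    intro u hu
    have hueq : u ∈ supDiff Δ (fun z => f a z + ∑ v ∈ s, f v z) x := by
      intro z hz
      have h := hu z hz
      simp only [Finset.sum_cons] at h
      exact h
    obtain ⟨p, q, hp, hq, hpq⟩ := stmt17_split hΔconv hΔint (hconc a)
      (stmt17_concave_sum hΔconv s f (fun v _ => hconc v)) (hcont a) hx hueq
    obtain ⟨b, hb1, hb2, hb3⟩ := ih q hq
    refine ⟨Function.update b a p, ?_, ?_, ?_⟩
    · intro v hv
      rcases Finset.mem_cons.1 hv with rfl | hv'
      · simpa using hp
      · have hva : v ≠ a := fun h => ha (by rw [← h]; exact hv')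
        simpa [Function.update_of_ne hva] using hb1 v hv'
    · intro v hv
      have hva : v ≠ a := fun h => hv (by rw [h]; exact Finset.mem_cons_self a s)
      have hvs : v ∉ s := fun h' => hv (Finset.mem_cons_of_mem h')
      simp [Function.update_of_ne hva, hb2 v hvs]
    · rw [Finset.sum_cons]
      have : ∑ v ∈ s, Function.update b a p v = ∑ v ∈ s, b v :=
        Finset.sum_congr rfl fun v hv =>
          Function.update_of_ne (fun h => ha (by rw [← h]; exact hv)) _ _
      simp [Function.update_self, this, hb3, hpq]

/-- Let `Δ ⊂ ℝⁿ` be a compact convex polytope with nonempty interior,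
`θ_v : Δ → ℝ` continuous concave functions (zero for all but finitely many `v`) with
weights `n_v > 0`, and `θ = Σ_v n_v θ_v`. If `0` is a vertex of `∂θ(x_max)` at some
maximizer `x_max` of `θ` on `Δ`, then for every maximizer `x` of `θ`: `0` is a vertex
of `∂θ(x)`, the equation `0 = Σ_v n_v a_v` with finitely supported `(a_v)`,
`a_v ∈ ∂θ_v(x)`, has a unique solution, and in any such solution each `a_v` is a
vertex of `∂θ_v(x)`. -/
theorem stmt17 {n : ℕ} {V : Type*}
    (Δ : Set (EuclideanSpace ℝ (Fin n)))
    (hΔcpt : IsCompact Δ) (hΔconv : Convex ℝ Δ) (hΔint : (interior Δ).Nonempty)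
    (nv : V → ℝ) (hnv : ∀ v, 0 < nv v)
    (θ : V → EuclideanSpace ℝ (Fin n) → ℝ)
    (hθconc : ∀ v, ConcaveOn ℝ Δ (θ v))
    (hθcont : ∀ v, ContinuousOn (θ v) Δ)
    (hθfin : {v : V | ∃ x ∈ Δ, θ v x ≠ 0}.Finite)
    (θtot : EuclideanSpace ℝ (Fin n) → ℝ)
    (hθtot : ∀ x, θtot x = ∑ᶠ v, nv v * θ v x)
    (xmax : EuclideanSpace ℝ (Fin n))
    (hxmax : xmax ∈ Δ ∧ ∀ y ∈ Δ, θtot y ≤ θtot xmax)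
    (hvert : (0 : EuclideanSpace ℝ (Fin n)) ∈
      Set.extremePoints ℝ (supDiff Δ θtot xmax)) :
    ∀ x, x ∈ Δ → (∀ y ∈ Δ, θtot y ≤ θtot x) →
      ((0 : EuclideanSpace ℝ (Fin n)) ∈ Set.extremePoints ℝ (supDiff Δ θtot x) ∧
      (∃! a : V → EuclideanSpace ℝ (Fin n),
        (Function.support a).Finite ∧ (∀ v, a v ∈ supDiff Δ (θ v) x) ∧
          ∑ᶠ v, nv v • a v = 0) ∧
      ∀ a : V → EuclideanSpace ℝ (Fin n),
        (Function.support a).Finite → (∀ v, a v ∈ supDiff Δ (θ v) x) →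
        ∑ᶠ v, nv v • a v = 0 →
        ∀ v, a v ∈ Set.extremePoints ℝ (supDiff Δ (θ v) x)) := by
  classical
  obtain ⟨hxmaxΔ, hxmaxmax⟩ := hxmax
  intro x hxΔ hmax
  set S : Finset V := hθfin.toFinset with hS
  have hSmem : ∀ v, v ∉ S → ∀ z ∈ Δ, θ v z = 0 := by
    intro v hv z hz
    by_contra h
    exact hv (hθfin.mem_toFinset.2 ⟨z, hz, h⟩)
  have hθtotΔ : ∀ z ∈ Δ, θtot z = ∑ v ∈ S, nv v * θ v z := by
    intro z hz
    rw [hθtot]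
    apply finsum_eq_finset_sum_of_support_subset
    intro v hv
    simp only [Function.mem_support] at hv
    have hvz : θ v z ≠ 0 := fun h => hv (by rw [h, mul_zero])
    exact Finset.mem_coe.2 (hθfin.mem_toFinset.2 ⟨z, hz, hvz⟩)
  have hsum_mem : ∀ (a : V → EuclideanSpace ℝ (Fin n)), (Function.support a).Finite →
      (∀ v, a v ∈ supDiff Δ (θ v) x) → (∑ᶠ v, nv v • a v) ∈ supDiff Δ θtot x := by
    intro a hfin hmem
    have hTsub : (Function.support fun v => nv v • a v) ⊆ ↑(S ∪ hfin.toFinset) := by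
      intro v hv
      simp only [Function.mem_support] at hv
      have hav : a v ≠ 0 := fun h => hv (by rw [h, smul_zero])
      exact Finset.mem_coe.2 (Finset.mem_union_right _ (hfin.mem_toFinset.2 hav))
    rw [finsum_eq_finset_sum_of_support_subset _ hTsub]
    intro z hz
    rw [hθtotΔ z hz, hθtotΔ x hxΔ]
    have h1 : ∑ v ∈ S, nv v * θ v z = ∑ v ∈ S ∪ hfin.toFinset, nv v * θ v z :=
      Finset.sum_subset Finset.subset_union_left
        (fun v _ hvS => by rw [hSmem v hvS z hz, mul_zero])
    have h2 : ∑ v ∈ S, nv v * θ v x = ∑ v ∈ S ∪ hfin.toFinset, nv v * θ v x :=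
      Finset.sum_subset Finset.subset_union_left
        (fun v _ hvS => by rw [hSmem v hvS x hxΔ, mul_zero])
    rw [h1, h2, ← Finset.sum_sub_distrib, sum_inner]
    apply Finset.sum_le_sum
    intro v _
    rw [real_inner_smul_left]
    have h3 := hmem v z hz
    nlinarith [mul_le_mul_of_nonneg_left h3 (hnv v).le]
  have h0mem : (0 : EuclideanSpace ℝ (Fin n)) ∈ supDiff Δ θtot x := by
    intro z hz
    rw [inner_zero_left]
    linarith [hmax z hz]
  have heqmax : θtot xmax = θtot x := le_antisymm (hmax xmax hxmaxΔ) (hxmaxmax x hxΔ)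
  have htransfer : ∀ p ∈ supDiff Δ θtot x, ⟪p, xmax - x⟫ = 0 → p ∈ supDiff Δ θtot xmax := by
    intro p hp hp0 z hz
    have h1 := hp z hz
    have h2 : ⟪p, z - x⟫ = ⟪p, z - xmax⟫ + ⟪p, xmax - x⟫ := by
      rw [← inner_add_right]
      congr 1
      abel
    rw [← heqmax] at h1
    rw [h2, hp0, add_zero] at h1
    exact h1
  have hnonneg : ∀ p ∈ supDiff Δ θtot x, 0 ≤ ⟪p, xmax - x⟫ := by
    intro p hp
    have h := hp xmax hxmaxΔ
    rw [← heqmax] at h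
    linarith
  have hxext : (0 : EuclideanSpace ℝ (Fin n)) ∈ Set.extremePoints ℝ (supDiff Δ θtot x) := by
    refine ⟨h0mem, ?_⟩
    intro p hp q hq hseg
    obtain ⟨α, β, hα, hβ, hαβ, hcombo⟩ := hseg
    have h1 := hnonneg p hp
    have h2 := hnonneg q hq
    have h3 : α * ⟪p, xmax - x⟫ + β * ⟪q, xmax - x⟫ = 0 := by
      rw [← real_inner_smul_left, ← real_inner_smul_left, ← inner_add_left, hcombo,
        inner_zero_left]
    have hp0 : ⟪p, xmax - x⟫ = 0 := by nlinarith
    have hq0 : ⟪q, xmax - x⟫ = 0 := by nlinarith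
    exact hvert.2 (htransfer p hp hp0) (htransfer q hq hq0) ⟨α, β, hα, hβ, hαβ, hcombo⟩
  have hupd : ∀ (a : V → EuclideanSpace ℝ (Fin n)), (Function.support a).Finite →
      ∀ (v0 : V) (w : EuclideanSpace ℝ (Fin n)),
      ∑ᶠ v, nv v • Function.update a v0 w v
        = (∑ᶠ v, nv v • a v) - nv v0 • a v0 + nv v0 • w := by
    intro a hfin v0 w
    set T : Finset V := insert v0 hfin.toFinset with hT
    have hsub1 : (Function.support fun v => nv v • a v) ⊆ ↑T := by
      intro v hv
      simp only [Function.mem_support] at hv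
      have hav : a v ≠ 0 := fun h => hv (by rw [h, smul_zero])
      exact Finset.mem_coe.2 (Finset.mem_insert_of_mem (hfin.mem_toFinset.2 hav))
    have hsub2 : (Function.support fun v => nv v • Function.update a v0 w v) ⊆ ↑T := by
      intro v hv
      simp only [Function.mem_support] at hv
      by_cases hvv : v = v0
      · subst hvv
        exact Finset.mem_coe.2 (Finset.mem_insert_self _ _)
      · rw [Function.update_of_ne hvv] at hv
        have hav : a v ≠ 0 := fun h => hv (by rw [h, smul_zero])
        exact Finset.mem_coe.2 (Finset.mem_insert_of_mem (hfin.mem_toFinset.2 hav))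
    rw [finsum_eq_finset_sum_of_support_subset _ hsub1,
      finsum_eq_finset_sum_of_support_subset _ hsub2]
    have hv0T : v0 ∈ T := Finset.mem_insert_self _ _
    have heq : ∀ v, nv v • Function.update a v0 w v
        = Function.update (fun v => nv v • a v) v0 (nv v0 • w) v := by
      intro v
      by_cases hvv : v = v0
      · subst hvv; simp
      · simp [Function.update_of_ne hvv]
    calc ∑ v ∈ T, nv v • Function.update a v0 w v
        = ∑ v ∈ T, Function.update (fun v => nv v • a v) v0 (nv v0 • w) v :=
          Finset.sum_congr rfl fun v _ => heq v
      _ = nv v0 • w + ∑ v ∈ T \ {v0}, nv v • a v := Finset.sum_update_of_mem hv0T _ _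
      _ = (∑ v ∈ T, nv v • a v) - nv v0 • a v0 + nv v0 • w := by
          rw [Finset.sum_eq_sum_sdiff_singleton_add hv0T (fun v => nv v • a v)]
          abel
  have hkey2 : ∀ (a : V → EuclideanSpace ℝ (Fin n)), (Function.support a).Finite →
      (∀ v, a v ∈ supDiff Δ (θ v) x) → ∑ᶠ v, nv v • a v = 0 →
      ∀ (v0 : V) (w : EuclideanSpace ℝ (Fin n)), w ∈ supDiff Δ (θ v0) x →
      (nv v0 • w - nv v0 • a v0) ∈ supDiff Δ θtot x := by
    intro a hfin hmem hzero v0 w hw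
    have h1 : ∑ᶠ v, nv v • Function.update a v0 w v = nv v0 • w - nv v0 • a v0 := by
      rw [hupd a hfin v0 w, hzero]
      abel
    rw [← h1]
    apply hsum_mem
    · apply (hfin.union (Set.finite_singleton v0)).subset
      intro v hv
      simp only [Function.mem_support] at hv
      by_cases hvv : v = v0
      · exact Or.inr hvv
      · rw [Function.update_of_ne hvv] at hv
        exact Or.inl hv
    · intro v
      by_cases hvv : v = v0
      · subst hvv
        simpa using hw
      · rw [Function.update_of_ne hvv]
        exact hmem v
  have hcomp : ∀ a : V → EuclideanSpace ℝ (Fin n), (Function.support a).Finite →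
      (∀ v, a v ∈ supDiff Δ (θ v) x) → ∑ᶠ v, nv v • a v = 0 →
      ∀ v0, a v0 ∈ Set.extremePoints ℝ (supDiff Δ (θ v0) x) := by
    intro a hfin hmem hzero v0
    refine ⟨hmem v0, ?_⟩
    intro p hp q hq hseg
    obtain ⟨α, β, hα, hβ, hαβ, hcombo⟩ := hseg
    have hsp := hkey2 a hfin hmem hzero v0 p hp
    have hsq := hkey2 a hfin hmem hzero v0 q hq
    have hzero2 : α • (nv v0 • p - nv v0 • a v0) + β • (nv v0 • q - nv v0 • a v0) = 0 := by
      have hid : α • (nv v0 • p - nv v0 • a v0) + β • (nv v0 • q - nv v0 • a v0)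
          = nv v0 • (α • p + β • q) - (α + β) • nv v0 • a v0 := by module
      rw [hid, hcombo, hαβ, one_smul, sub_self]
    have hres := hxext.2 hsp hsq ⟨α, β, hα, hβ, hαβ, hzero2⟩
    · have h2 : nv v0 • p = nv v0 • a v0 := by
        have := hres
        rwa [sub_eq_zero] at this
      exact smul_right_injective _ (hnv v0).ne' h2
  have huniq : ∀ a a' : V → EuclideanSpace ℝ (Fin n),
      (Function.support a).Finite → (∀ v, a v ∈ supDiff Δ (θ v) x) → ∑ᶠ v, nv v • a v = 0 →
      (Function.support a').Finite → (∀ v, a' v ∈ supDiff Δ (θ v) x) → ∑ᶠ v, nv v • a' v = 0 →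
      a = a' := by
    intro a a' hfa hma hza hfa' hma' hza'
    funext v0
    have hs1 := hkey2 a hfa hma hza v0 (a' v0) (hma' v0)
    have hs2 := hkey2 a' hfa' hma' hza' v0 (a v0) (hma v0)
    have hzero2 : (1/2 : ℝ) • (nv v0 • a' v0 - nv v0 • a v0)
        + (1/2 : ℝ) • (nv v0 • a v0 - nv v0 • a' v0) = 0 := by module
    have hres := hxext.2 hs1 hs2
      ⟨1/2, 1/2, by norm_num, by norm_num, by norm_num, hzero2⟩
    have h2 : nv v0 • a' v0 = nv v0 • a v0 := by
      have := hres
      rwa [sub_eq_zero] at this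
    exact (smul_right_injective _ (hnv v0).ne' h2).symm
  have hexist : ∃ a : V → EuclideanSpace ℝ (Fin n), (Function.support a).Finite ∧
      (∀ v, a v ∈ supDiff Δ (θ v) x) ∧ ∑ᶠ v, nv v • a v = 0 := by
    rcases Finset.eq_empty_or_nonempty S with hSe | hSne
    · refine ⟨fun _ => 0, by simp, ?_, by simp⟩
      intro v z hz
      rw [hSmem v (by simp [hSe]) z hz, hSmem v (by simp [hSe]) x hxΔ]
      simp
    · have h0' : (0 : EuclideanSpace ℝ (Fin n)) ∈
          supDiff Δ (fun z => ∑ v ∈ S, nv v * θ v z) x := by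
        intro z hz
        have h := h0mem z hz
        rwa [hθtotΔ z hz, hθtotΔ x hxΔ] at h
      obtain ⟨b, hb1, hb2, hb3⟩ := stmt17_sum_split hΔconv hΔint hxΔ S hSne
        (fun v z => nv v * θ v z)
        (fun v => by
          have h := (hθconc v).smul (hnv v).le
          simpa [smul_eq_mul] using h)
        (fun v => continuousOn_const.mul (hθcont v))
        0 h0'
      refine ⟨fun v => (nv v)⁻¹ • b v, ?_, ?_, ?_⟩
      · apply S.finite_toSet.subset
        intro v hv
        simp only [Function.mem_support] at hv
        by_contra hvS
        exact hv (by rw [hb2 v hvS, smul_zero])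
      · intro v
        show ((nv v)⁻¹ • b v) ∈ supDiff Δ (θ v) x
        by_cases hvS : v ∈ S
        · intro z hz
          have h2 := hb1 v hvS z hz
          simp only at h2
          rw [real_inner_smul_left]
          have h3 := mul_le_mul_of_nonneg_left h2 (inv_nonneg.2 (hnv v).le)
          have h4 : (nv v)⁻¹ * (nv v * θ v z - nv v * θ v x) = θ v z - θ v x := by
            rw [inv_mul_eq_div, div_eq_iff (hnv v).ne']
            ring
          rw [h4] at h3
          exact h3
        · intro z hz
          rw [hSmem v hvS z hz, hSmem v hvS x hxΔ, hb2 v hvS]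
          simp
      · have hsupp : (Function.support fun v => nv v • (nv v)⁻¹ • b v) ⊆ ↑S := by
          intro v hv
          simp only [Function.mem_support] at hv
          by_contra hvS
          exact hv (by rw [hb2 v hvS]; simp)
        rw [finsum_eq_finset_sum_of_support_subset _ hsupp, ← hb3]
        apply Finset.sum_congr rfl
        intro v _
        rw [smul_smul, mul_inv_cancel₀ (hnv v).ne', one_smul]
  obtain ⟨a0, ha0f, ha0m, ha0z⟩ := hexist
  refine ⟨hxext, ⟨a0, ⟨ha0f, ha0m, ha0z⟩, ?_⟩, fun a hf hm hz v => hcomp a hf hm hz v⟩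
  intro a ha
  exact huniq a a0 ha.1 ha.2.1 ha.2.2 ha0f ha0m ha0z
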